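/- Let (n,m,k,l) be natural numbers with m ≤ n−m, k ≤ n, m+k−n ≤ l and l ≤ min(m,k), and set M := m−l, N := n−m−k+l. Then for every integer x with 0 ≤ x ≤ m the following summation formula of rational numbers holds: ∑_{u=0}^{x} C(n,u)·((n−2u+1)/(n−u+1))·[ ∑_{r=0}^{min(u,M,N)} ((−u)_r·(u−n−1)_r·(−M)_r·(−N)_r)/(r!·(−m)_r·(m−n)_r·(−M−N)_r) ] = C(n,x) · ∑_{r=0}^{min(x,M,N)} ((−x)_r·(x−n)_r·(−M)_r·(−N)_r)/(r!·(−m)_r·(m−n)_r·(−M−N)_r). Equivalently, the cumulative distribution function of the distribution P_{n,m,k,l} is given by a single terminating ₄F₃-hypergeometric series. -/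

import Mathlib

open Finset

/-- Rising factorial `(a)_r = a(a+1)⋯(a+r−1)` in `ℚ`. -/
noncomputable def risingFac (a : ℚ) (r : ℕ) : ℚ := ∏ j ∈ Finset.range r, (a + j)


/-- The terminating `₄F₃`-hypergeometric (Racah polynomial) sum
`∑_{r=0}^{min(x,M,N)} ((−x)_r (x−n−1)_r (−M)_r (−N)_r)/(r! (−m)_r (m−n)_r (−M−N)_r)`. -/
noncomputable def racahSum (n m M N x : ℕ) : ℚ :=
  ∑ r ∈ Finset.range (min x (min M N) + 1),
    risingFac (-(x : ℚ)) r * risingFac ((x : ℚ) - n - 1) r * risingFac (-(M : ℚ)) r *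
        risingFac (-(N : ℚ)) r /
      ((r.factorial : ℚ) * risingFac (-(m : ℚ)) r * risingFac ((m : ℚ) - n) r *
        risingFac (-((M : ℚ) + N)) r)

lemma risingFac_succ (a : ℚ) (r : ℕ) :
    risingFac a (r + 1) = risingFac a r * (a + r) :=
  Finset.prod_range_succ _ _

lemma risingFac_shift (a : ℚ) (r : ℕ) :
    risingFac a r * (a + r) = a * risingFac (a + 1) r := by
  induction r with
  | zero => simp [risingFac]
  | succ r ih =>
      rw [risingFac_succ, risingFac_succ]
      push_cast
      linear_combination (a + r + 1) * ih

lemma risingFac_nat_neg_eq_zero (x r : ℕ) (h : x < r) :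
    risingFac (-(x : ℚ)) r = 0 :=
  Finset.prod_eq_zero (Finset.mem_range.2 h) (by push_cast; ring)

lemma key_identity (u n : ℚ) (r : ℕ) (hu : u ≠ 0) (hun : u - n - 1 ≠ 0) :
    (n - u + 1) * (risingFac (-u) r * risingFac (u - n) r)
      = u * (risingFac (1 - u) r * risingFac (u - n - 1) r)
        + (n - 2 * u + 1) * (risingFac (-u) r * risingFac (u - n - 1) r) := by
  have h1 : risingFac (-u) r * (-u + r) = -u * risingFac (1 - u) r := by
    have := risingFac_shift (-u) r
    rw [show (-u + 1 : ℚ) = 1 - u by ring] at this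
    exact this
  have h2 : risingFac (u - n - 1) r * (u - n - 1 + r) = (u - n - 1) * risingFac (u - n) r := by
    have := risingFac_shift (u - n - 1) r
    rw [show (u - n - 1 + 1 : ℚ) = u - n by ring] at this
    exact this
  apply mul_left_cancel₀ (mul_ne_zero hu hun)
  linear_combination (-(u) * (u - n - 1) * risingFac (u - n - 1) r) * h1
    + (-(u) * (n - u + 1) * risingFac (-u) r) * h2

noncomputable def rdenom (n m M N r : ℕ) : ℚ :=
  (r.factorial : ℚ) * risingFac (-(m : ℚ)) r * risingFac ((m : ℚ) - n) r *
    risingFac (-((M : ℚ) + N)) r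

noncomputable def snum (n M N x r : ℕ) : ℚ :=
  risingFac (-(x : ℚ)) r * risingFac ((x : ℚ) - n) r * risingFac (-(M : ℚ)) r *
    risingFac (-(N : ℚ)) r

noncomputable def rnum (n M N x r : ℕ) : ℚ :=
  risingFac (-(x : ℚ)) r * risingFac ((x : ℚ) - n - 1) r * risingFac (-(M : ℚ)) r *
    risingFac (-(N : ℚ)) r

lemma snum_eq_zero (n M N x r : ℕ) (h : min x (min M N) < r) : snum n M N x r = 0 := by
  unfold snum
  rcases Nat.lt_or_ge x r with h' | h'
  · rw [risingFac_nat_neg_eq_zero x r h']; ring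
  · rcases Nat.lt_or_ge M r with h'' | h''
    · rw [risingFac_nat_neg_eq_zero M r h'']; ring
    · rw [risingFac_nat_neg_eq_zero N r (by omega)]; ring

lemma rnum_eq_zero (n M N x r : ℕ) (h : min x (min M N) < r) : rnum n M N x r = 0 := by
  unfold rnum
  rcases Nat.lt_or_ge x r with h' | h'
  · rw [risingFac_nat_neg_eq_zero x r h']; ring
  · rcases Nat.lt_or_ge M r with h'' | h''
    · rw [risingFac_nat_neg_eq_zero M r h'']; ring
    · rw [risingFac_nat_neg_eq_zero N r (by omega)]; ring

lemma ssum_ext (n m M N x K : ℕ) (hK : min x (min M N) + 1 ≤ K) :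
    ∑ r ∈ Finset.range (min x (min M N) + 1), snum n M N x r / rdenom n m M N r
      = ∑ r ∈ Finset.range K, snum n M N x r / rdenom n m M N r := by
  apply Finset.sum_subset (Finset.range_subset_range.2 hK)
  intro r _ hr
  rw [snum_eq_zero n M N x r (by simpa using Nat.lt_of_succ_le (Nat.le_of_not_lt
    (fun h => hr (Finset.mem_range.2 h))))]
  simp

lemma racahSum_ext (n m M N x K : ℕ) (hK : min x (min M N) + 1 ≤ K) :
    racahSum n m M N x = ∑ r ∈ Finset.range K, rnum n M N x r / rdenom n m M N r := by
  unfold racahSum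
  rw [show (∑ r ∈ Finset.range (min x (min M N) + 1),
      risingFac (-(x : ℚ)) r * risingFac ((x : ℚ) - n - 1) r * risingFac (-(M : ℚ)) r *
        risingFac (-(N : ℚ)) r /
      ((r.factorial : ℚ) * risingFac (-(m : ℚ)) r * risingFac ((m : ℚ) - n) r *
        risingFac (-((M : ℚ) + N)) r))
    = ∑ r ∈ Finset.range (min x (min M N) + 1), rnum n M N x r / rdenom n m M N r from rfl]
  apply Finset.sum_subset (Finset.range_subset_range.2 hK)
  intro r _ hr
  rw [rnum_eq_zero n M N x r (by simpa using Nat.lt_of_succ_le (Nat.le_of_not_lt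
    (fun h => hr (Finset.mem_range.2 h))))]
  simp

lemma step_term (n m M N x r : ℕ) (hx : x + 1 ≤ m) (hm : 2 * m ≤ n) :
    (n.choose x : ℚ) * (snum n M N x r / rdenom n m M N r)
      + (n.choose (x + 1) : ℚ) * (((n : ℚ) - 2 * (x + 1) + 1) / ((n : ℚ) - (x + 1) + 1))
          * (rnum n M N (x + 1) r / rdenom n m M N r)
    = (n.choose (x + 1) : ℚ) * (snum n M N (x + 1) r / rdenom n m M N r) := by
  have hxn : (x : ℚ) < n := by
    have h' : x + 1 ≤ n := by omega
    exact_mod_cast Nat.lt_of_succ_le h'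
  have hu : ((x : ℚ) + 1) ≠ 0 := by positivity
  have hun : ((x : ℚ) + 1) - n - 1 ≠ 0 := by
    intro h; nlinarith [hxn]
  have hn1 : (n : ℚ) - ((x : ℚ) + 1) + 1 ≠ 0 := by
    intro h; nlinarith [hxn]
  have hchoose : (n.choose x : ℚ) * ((n : ℚ) - ((x : ℚ) + 1) + 1)
      = (n.choose (x + 1) : ℚ) * ((x : ℚ) + 1) := by
    have h := Nat.choose_succ_right_eq n x
    have hxn' : x ≤ n := by omega
    have h2 : ((n.choose (x + 1) * (x + 1) : ℕ) : ℚ) = ((n.choose x * (n - x) : ℕ) : ℚ) := by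
      exact_mod_cast congrArg (Nat.cast : ℕ → ℚ) h
    push_cast [Nat.cast_sub hxn'] at h2
    linarith [h2]
  have key := key_identity ((x : ℚ) + 1) n r hu hun
  rw [show (1 - ((x : ℚ) + 1)) = -(x : ℚ) by ring,
      show ((x : ℚ) + 1 - (n : ℚ) - 1) = (x : ℚ) - (n : ℚ) by ring] at key
  have hnum : (n.choose x : ℚ) * snum n M N x r * ((n : ℚ) - ((x : ℚ) + 1) + 1)
      + (n.choose (x + 1) : ℚ) * ((n : ℚ) - 2 * ((x : ℚ) + 1) + 1) * rnum n M N (x + 1) r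
      = (n.choose (x + 1) : ℚ) * snum n M N (x + 1) r * ((n : ℚ) - ((x : ℚ) + 1) + 1) := by
    unfold snum rnum
    push_cast
    rw [show ((x : ℚ) + 1 - (n : ℚ) - 1) = (x : ℚ) - (n : ℚ) by ring]
    linear_combination (-(n.choose (x + 1) : ℚ) * risingFac (-(M : ℚ)) r
        * risingFac (-(N : ℚ)) r) * key
      + (risingFac (-(x : ℚ)) r * risingFac ((x : ℚ) - n) r * risingFac (-(M : ℚ)) r
        * risingFac (-(N : ℚ)) r) * hchoose
  by_cases hd : rdenom n m M N r = 0
  · simp [hd]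
  · field_simp
    linear_combination hnum

lemma aux_main (n m M N : ℕ) (hm : 2 * m ≤ n) :
    ∀ x, x ≤ m →
      ∑ u ∈ Finset.range (x + 1),
        (n.choose u : ℚ) * (((n : ℚ) - 2 * u + 1) / ((n : ℚ) - u + 1)) * racahSum n m M N u
      = (n.choose x : ℚ) *
          ∑ r ∈ Finset.range (min x (min M N) + 1), snum n M N x r / rdenom n m M N r := by
  intro x
  induction x with
  | zero =>
      intro _
      have hn : (n : ℚ) + 1 ≠ 0 := by positivity
      simp [racahSum, snum, rdenom, risingFac, hn]
  | succ x ih =>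
      intro hx1
      rw [Finset.sum_range_succ, ih (by omega)]
      rw [ssum_ext n m M N x (x + 1 + (min M N + 1)) (by omega),
          ssum_ext n m M N (x + 1) (x + 1 + (min M N + 1)) (by omega),
          racahSum_ext n m M N (x + 1) (x + 1 + (min M N + 1)) (by omega)]
      rw [Finset.mul_sum, Finset.mul_sum, Finset.mul_sum, ← Finset.sum_add_distrib]
      refine Finset.sum_congr rfl fun r _ => ?_
      have h := step_term n m M N x r (by omega) hm
      push_cast
      convert h using 3 <;> push_cast <;> ring

/-- **`₄F₃`-presentation of the cumulative distribution function**: with `M := m−l`,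
`N := n−m−k+l`,
`∑_{u=0}^{x} C(n,u) ((n−2u+1)/(n−u+1)) ₄F₃(−u,u−n−1,−M,−N;−m,m−n,−M−N;1)
  = C(n,x) ₄F₃(−x,x−n,−M,−N;−m,m−n,−M−N;1)`. -/
theorem cdf_four_three_presentation
    (n m k l : ℕ) (hm : 2 * m ≤ n) (hk : k ≤ n) (hl : m + k ≤ n + l)
    (hlm : l ≤ m) (hlk : l ≤ k) (x : ℕ) (hx : x ≤ m) :
    ∑ u ∈ Finset.range (x + 1),
      (n.choose u : ℚ) * (((n : ℚ) - 2 * u + 1) / ((n : ℚ) - u + 1)) *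
        racahSum n m (m - l) (n + l - m - k) u
    = (n.choose x : ℚ) *
        ∑ r ∈ Finset.range (min x (min (m - l) (n + l - m - k)) + 1),
          risingFac (-(x : ℚ)) r * risingFac ((x : ℚ) - n) r *
              risingFac (-((m - l : ℕ) : ℚ)) r * risingFac (-((n + l - m - k : ℕ) : ℚ)) r /
            ((r.factorial : ℚ) * risingFac (-(m : ℚ)) r * risingFac ((m : ℚ) - n) r *
              risingFac (-(((m - l : ℕ) : ℚ) + ((n + l - m - k : ℕ) : ℚ))) r) := by
  have h := aux_main n m (m - l) (n + l - m - k) hm x hx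
  simp only [snum, rdenom] at h
  exact h
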